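/- arXiv:1611.09014 — 2 statements merged into one kernel-verified Lean document; each statement's English description precedes it below -/
import Mathlib

section
/- Completeness of range-restriction with respect to E-interpretations: for every clause set M, if rr(M) is E-satisfiable then M is E-satisfiable. -/
namespace BUMG

/-- First-order terms over function symbols `F`, with variables indexed by `ℕ`. -/
inductive Term (F : Type) : Type where
  | var : ℕ → Term F
  | app : F → List (Term F) → Term F

namespace Term
variable {F : Type}

/-- The list of variables occurring in a term. -/
def vars : Term F → List ℕ
  | var n => [n]
  | app _ ts => ts.attach.flatMap (fun t => vars t.1)
decreasing_by simp_wf; have := List.sizeOf_lt_of_mem t.2; omega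

/-- The function symbols (with the arity of the occurrence) occurring in a term. -/
def funcs : Term F → List (F × ℕ)
  | var _ => []
  | app f ts => (f, ts.length) :: ts.attach.flatMap (fun t => funcs t.1)
decreasing_by simp_wf; have := List.sizeOf_lt_of_mem t.2; omega

/-- Applying a substitution to a term. -/
def subst (g : ℕ → Term F) : Term F → Term F
  | var n => g n
  | app f ts => app f (ts.attach.map (fun t => subst g t.1))
decreasing_by simp_wf; have := List.sizeOf_lt_of_mem t.2; omega

/-- The number of occurrences of symbols (variables and function symbols) in a term. -/
def size : Term F → ℕ
  | var _ => 1
  | app _ ts => 1 + (ts.attach.map (fun t => size t.1)).sum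
decreasing_by simp_wf; have := List.sizeOf_lt_of_mem t.2; omega

/-- A term is ground iff it contains no variables. -/
def IsGround (t : Term F) : Prop := t.vars = []

def isVar : Term F → Bool
  | var _ => true
  | app _ _ => false

/-- A proper functional term is a term that is neither a variable nor a constant. -/
def isPF : Term F → Bool
  | app _ (_ :: _) => true
  | _ => false

/-- The subterm relation. -/
inductive Subterm : Term F → Term F → Prop
  | refl (t : Term F) : Subterm t t
  | app {s t : Term F} {f : F} {ts : List (Term F)} :
      t ∈ ts → Subterm s t → Subterm s (app f ts)

end Term

/-- Atoms over predicate symbols `P` and function symbols `F`. -/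
structure Atom (P F : Type) where
  pred : P
  args : List (Term F)

namespace Atom
variable {P F : Type}

def subst (g : ℕ → Term F) (a : Atom P F) : Atom P F := ⟨a.pred, a.args.map (Term.subst g)⟩
def vars (a : Atom P F) : List ℕ := a.args.flatMap Term.vars
def IsGround (a : Atom P F) : Prop := a.vars = []
def funcs (a : Atom P F) : List (F × ℕ) := a.args.flatMap Term.funcs
/-- Whether the atom contains a proper functional term. -/
def hasPF (a : Atom P F) : Bool := a.args.any Term.isPF
def size (a : Atom P F) : ℕ := 1 + (a.args.map Term.size).sum

end Atom

/-- A clause `H₁ ∨ ... ∨ Hₘ ← B₁ ∧ ... ∧ Bₖ` with head atoms `heads`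
and body atoms `body`. -/
structure Clause (P F : Type) where
  heads : List (Atom P F)
  body : List (Atom P F)

namespace Clause
variable {P F : Type}

def atoms (C : Clause P F) : List (Atom P F) := C.heads ++ C.body
def vars (C : Clause P F) : List ℕ := C.atoms.flatMap Atom.vars
def bodyVars (C : Clause P F) : List ℕ := C.body.flatMap Atom.vars
def headVars (C : Clause P F) : List ℕ := C.heads.flatMap Atom.vars
def maxVar (C : Clause P F) : ℕ := C.vars.foldr max 0
def subst (g : ℕ → Term F) (C : Clause P F) : Clause P F :=
  ⟨C.heads.map (Atom.subst g), C.body.map (Atom.subst g)⟩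
/-- The predicate symbols (with the arity of the occurrence) occurring in a clause. -/
def preds (C : Clause P F) : List (P × ℕ) := C.atoms.map (fun a => (a.pred, a.args.length))
/-- The function symbols (with the arity of the occurrence) occurring in a clause. -/
def funcs (C : Clause P F) : List (F × ℕ) := C.atoms.flatMap Atom.funcs
/-- The number of occurrences of symbols in a clause. -/
def size (C : Clause P F) : ℕ := (C.atoms.map Atom.size).sum

/-- A clause is range-restricted iff every variable occurring in it occurs in its body. -/
def RangeRestricted (C : Clause P F) : Prop := ∀ v ∈ C.vars, v ∈ C.bodyVars

/-- A Bernays–Schönfinkel clause: every functional term occurring in it is a constant. -/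
def BS (C : Clause P F) : Prop := ∀ fn ∈ C.funcs, fn.2 = 0

end Clause

/-- A clause set is range-restricted iff all its clauses are. -/
def RangeRestrictedSet {P F : Type} (M : Set (Clause P F)) : Prop :=
  ∀ C ∈ M, C.RangeRestricted

/-- The predicate symbols (with arities) occurring in a clause set. -/
def predsOf {P F : Type} (M : Set (Clause P F)) : Set (P × ℕ) :=
  { pn | ∃ C ∈ M, pn ∈ C.preds }

/-- The function symbols (with arities) occurring in a clause set. -/
def funcsOf {P F : Type} (M : Set (Clause P F)) : Set (F × ℕ) :=
  { fn | ∃ C ∈ M, fn ∈ C.funcs }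

/-- A signature: a set of predicate symbols with arities and
a set of function symbols with arities. -/
structure Sig (P F : Type) where
  preds : Set (P × ℕ)
  funcs : Set (F × ℕ)

/-- The clause set `M` is well-formed over the signature `σ`: all symbols occurring in `M`
belong to `σ` (with matching arities). -/
def WFSet {P F : Type} (σ : Sig P F) (M : Set (Clause P F)) : Prop :=
  ∀ C ∈ M, (∀ pn ∈ C.preds, pn ∈ σ.preds) ∧ (∀ fn ∈ C.funcs, fn ∈ σ.funcs)

/-- The total number of occurrences of symbols in a clause set. -/
noncomputable def setSize {P F : Type} (M : Set (Clause P F)) : ℕ :=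
  ∑ᶠ C ∈ M, C.size

/-! ### Herbrand semantics -/

/-- A substitution is ground iff it maps every variable to a ground term. -/
def GroundSubst {F : Type} (g : ℕ → Term F) : Prop := ∀ n, (g n).IsGround

/-- A (Herbrand) interpretation `I` (a set of ground atoms) satisfies a clause iff
it satisfies every ground instance of it. -/
def satClause {P F : Type} (I : Set (Atom P F)) (C : Clause P F) : Prop :=
  ∀ g : ℕ → Term F, GroundSubst g →
    (∀ a ∈ C.body, a.subst g ∈ I) → ∃ a ∈ C.heads, a.subst g ∈ I

/-- A clause set is satisfiable iff some Herbrand interpretation (a set of ground atoms)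
satisfies every ground instance of every clause of it. -/
def Satisfiable {P F : Type} (M : Set (Clause P F)) : Prop :=
  ∃ I : Set (Atom P F), (∀ a ∈ I, a.IsGround) ∧ ∀ C ∈ M, satClause I C

/-! ### Equality axioms and E-satisfiability -/

/-- The equality atom `s ≈ t` (`eqP` being the distinguished equality predicate `≈`). -/
def eqAtom {P F : Type} (eqP : P) (s t : Term F) : Atom P F := ⟨eqP, [s, t]⟩

def rangeVars {F : Type} (n : ℕ) : List (Term F) := (List.range n).map Term.var

def xsList {F : Type} (n : ℕ) : List (Term F) := (List.range n).map (fun i => Term.var (2*i))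
def ysList {F : Type} (n : ℕ) : List (Term F) := (List.range n).map (fun i => Term.var (2*i+1))
def eqConjList {P F : Type} (eqP : P) (n : ℕ) : List (Atom P F) :=
  (List.range n).map (fun i => eqAtom eqP (Term.var (2*i)) (Term.var (2*i+1)))

/-- The equality axioms `EAX`: `≈` is reflexive, symmetric, transitive and compatible with
the given function and predicate symbols. -/
def EAX {P F : Type} (eqP : P) (Ps : Set (P × ℕ)) (Fs : Set (F × ℕ)) : Set (Clause P F) :=
  { ⟨[eqAtom eqP (Term.var 0) (Term.var 0)], []⟩,
    ⟨[eqAtom eqP (Term.var 1) (Term.var 0)], [eqAtom eqP (Term.var 0) (Term.var 1)]⟩,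
    ⟨[eqAtom eqP (Term.var 0) (Term.var 2)],
      [eqAtom eqP (Term.var 0) (Term.var 1), eqAtom eqP (Term.var 1) (Term.var 2)]⟩ } ∪
  { D | ∃ fn ∈ Fs,
      D = ⟨[eqAtom eqP (Term.app fn.1 (xsList fn.2)) (Term.app fn.1 (ysList fn.2))],
           eqConjList eqP fn.2⟩ } ∪
  { D | ∃ pn ∈ Ps,
      D = ⟨[⟨pn.1, ysList pn.2⟩], ⟨pn.1, xsList pn.2⟩ :: eqConjList eqP pn.2⟩ }

/-- A clause set `M` is E-satisfiable iff `M` together with the equality axioms for the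
symbols occurring in `M` is satisfiable. -/
def ESatisfiable {P F : Type} (eqP : P) (M : Set (Clause P F)) : Prop :=
  Satisfiable (M ∪ EAX eqP (predsOf M) (funcsOf M))

/-! ### Range-restricting transformations -/

/-- The atom `dom(t)`. -/
def domAtom {P F : Type} (domP : P) (t : Term F) : Atom P F := ⟨domP, [t]⟩

/-- The term `c` for a constant `c`. -/
def cTerm {F : Type} (c : F) : Term F := Term.app c []

/-- The clause `dom(c) ← ⊤`. -/
def domcClause {P F : Type} (domP : P) (c : F) : Clause P F :=
  ⟨[domAtom domP (cTerm c)], []⟩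

/-- Range-restricting a clause (Step (2) of `crr`, Step (3) of `rr`):
`H ← B` becomes `H ← B ∧ dom(x₁) ∧ ... ∧ dom(xₖ)` where `x₁,...,xₖ` are the variables
occurring in the head but not in the body. -/
def rangeRestrictClause {P F : Type} (domP : P) (C : Clause P F) : Clause P F :=
  ⟨C.heads, C.body ++
    ((C.headVars.filter (fun v => v ∉ C.bodyVars)).dedup).map
      (fun v => domAtom domP (Term.var v))⟩

/-- The argument list of the term abstraction of an atom: argument positions holding
non-variable terms are replaced by fresh variables. -/
def abstrArgs {F : Type} (base : ℕ) (ts : List (Term F)) : List (Term F) :=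
  ts.mapIdx (fun i t => if t.isVar then t else Term.var (base + i))

/-- Step (2) of the `rr` transformation: for each clause `H ← B` of `M`, each body atom
`P(t₁,...,tₙ)` of `B` with term abstraction `P(s₁,...,sₙ)` and abstraction substitution `α`,
the clauses `dom(xᵢ)α ← P(s₁,...,sₙ)` for every `xᵢ` in the domain of `α`. -/
def step2Set {P F : Type} (domP : P) (M : Set (Clause P F)) : Set (Clause P F) :=
  { D | ∃ C ∈ M, ∃ a ∈ C.body, ∃ i : Fin a.args.length,
        (a.args.get i).isVar = false ∧
        D = ⟨[domAtom domP (a.args.get i)],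
             [⟨a.pred, abstrArgs (C.maxVar + 1) a.args⟩]⟩ }

/-- Step (4) of the `rr` transformation: the clauses `dom(xᵢ) ← P(x₁,...,xₙ)` for every
`n`-ary predicate symbol `P` of the signature and every `1 ≤ i ≤ n`. -/
def step4Set {P F : Type} (domP : P) (Ps : Set (P × ℕ)) : Set (Clause P F) :=
  { D | ∃ pn ∈ Ps, ∃ i, i < pn.2 ∧
        D = ⟨[domAtom domP (Term.var i)], [⟨pn.1, rangeVars pn.2⟩]⟩ }

/-- Step (5) of the `rr` transformation: the clauses `dom(xᵢ) ← dom(f(x₁,...,xₙ))` for every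
`n`-ary function symbol `f` of the signature and every `1 ≤ i ≤ n`. -/
def step5Set {P F : Type} (domP : P) (Fs : Set (F × ℕ)) : Set (Clause P F) :=
  { D | ∃ fn ∈ Fs, ∃ i, i < fn.2 ∧
        D = ⟨[domAtom domP (Term.var i)],
             [domAtom domP (Term.app fn.1 (rangeVars fn.2))]⟩ }

/-- The new range-restricting transformation `rr` (over the signature `σ`, with fresh unary
predicate symbol `dom` and constant `c`): the clauses of `M`, the clause `dom(c) ← ⊤` and
the Step-(2) clauses, all range-restricted by Step (3), together with the Step-(4) and
Step-(5) clauses. -/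
def rr {P F : Type} [DecidableEq P] [DecidableEq F] (σ : Sig P F) (domP : P) (c : F)
    (M : Set (Clause P F)) : Set (Clause P F) :=
  (rangeRestrictClause domP '' (M ∪ {domcClause domP c} ∪ step2Set domP M))
  ∪ step4Set domP σ.preds ∪ step5Set domP σ.funcs

/-- Step (3) of the classical transformation `crr`: the clauses
`dom(f(x₁,...,xₙ)) ← dom(x₁) ∧ ... ∧ dom(xₙ)` enumerating the Herbrand universe. -/
def crrStep3 {P F : Type} (domP : P) (Fs : Set (F × ℕ)) : Set (Clause P F) :=
  { D | ∃ fn ∈ Fs,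
        D = ⟨[domAtom domP (Term.app fn.1 (rangeVars fn.2))],
             (List.range fn.2).map (fun i => domAtom domP (Term.var i))⟩ }

/-- The classical range-restricting transformation `crr`. -/
def crr {P F : Type} [DecidableEq P] [DecidableEq F] (σ : Sig P F) (domP : P) (c : F)
    (M : Set (Clause P F)) : Set (Clause P F) :=
  (rangeRestrictClause domP '' (M ∪ {domcClause domP c})) ∪ crrStep3 domP σ.funcs

/-! ### Shifting -/

/-- Partial flattening of the arguments of a non-equational body atom: top-level proper
functional terms are replaced by fresh variables. The `j`-th body atom uses the fresh
variables `base + Nat.pair j i`. -/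
def pfArgs {P F : Type} [DecidableEq P] (eqP : P) (base j : ℕ) (a : Atom P F) : Atom P F :=
  if a.pred = eqP then a
  else ⟨a.pred, a.args.mapIdx (fun i t => if t.isPF then Term.var (base + Nat.pair j i) else t)⟩

/-- The equations `tᵢ ≈ xᵢ` introduced by partially flattening a body atom. -/
def pfEqs {P F : Type} [DecidableEq P] (eqP : P) (base j : ℕ) (a : Atom P F) :
    List (Atom P F) :=
  if a.pred = eqP then []
  else (a.args.mapIdx (fun i t => (i, t))).filterMap
        (fun p => if p.2.isPF then
            some (eqAtom eqP p.2 (Term.var (base + Nat.pair j p.1))) else none)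

/-- Partial flattening of a clause. -/
def pfClause {P F : Type} [DecidableEq P] (eqP : P) (C : Clause P F) : Clause P F :=
  ⟨C.heads,
   C.body.mapIdx (fun j a => pfArgs eqP (C.maxVar + 1) j a) ++
   (C.body.mapIdx (fun j a => pfEqs eqP (C.maxVar + 1) j a)).flatten⟩

/-- The reflexivity unit clause `x ≈ x ← ⊤`. -/
def reflClause {P F : Type} (eqP : P) : Clause P F :=
  ⟨[eqAtom eqP (Term.var 0) (Term.var 0)], []⟩

/-- The partial flattening transformation `pf`. -/
def pf {P F : Type} [DecidableEq P] (eqP : P) (M : Set (Clause P F)) : Set (Clause P F) :=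
  pfClause eqP '' M ∪ {reflClause eqP}

/-- The atom `P̄(t₁,...,tₙ)` for the atom `P(t₁,...,tₙ)`, where `bar` maps each predicate
symbol `P` to the fresh predicate symbol `P̄` uniquely associated with it. -/
def barAtom {P F : Type} (bar : P → P) (a : Atom P F) : Atom P F := ⟨bar a.pred, a.args⟩

/-- Basic shifting of a clause: the body atoms containing a proper functional term are
moved, negated (via `bar`), into the head. -/
def bsClause {P F : Type} (bar : P → P) (C : Clause P F) : Clause P F :=
  ⟨C.heads ++ (C.body.filter (fun a => a.hasPF)).map (barAtom bar),
   C.body.filter (fun a => !a.hasPF)⟩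

/-- The predicate symbols (with arities) of shifted atoms of `M`. -/
def shiftedPreds {P F : Type} (M : Set (Clause P F)) : Set (P × ℕ) :=
  { pn | ∃ C ∈ M, ∃ a ∈ C.body, a.hasPF = true ∧ pn = (a.pred, a.args.length) }

/-- The basic shifting transformation `bs`: shift deep body atoms and add the shifted atom
consistency clauses `⊥ ← P(x₁,...,xₙ) ∧ P̄(x₁,...,xₙ)`. -/
def bs {P F : Type} (bar : P → P) (M : Set (Clause P F)) : Set (Clause P F) :=
  bsClause bar '' M ∪
  { D | ∃ pn ∈ shiftedPreds M,
        D = ⟨[], [⟨pn.1, rangeVars pn.2⟩, ⟨bar pn.1, rangeVars pn.2⟩]⟩ }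

/-- The shifting transformation: `sh(M) = bs(pf(M))`. -/
def sh {P F : Type} [DecidableEq P] (eqP : P) (bar : P → P) (M : Set (Clause P F)) :
    Set (Clause P F) :=
  bs bar (pf eqP M)

/-! ### Blocking -/

/-- The head `x ≈ y ∨ x ≉ y` of the blocking clauses. -/
def blockSplitHead {P F : Type} (eqP neqP : P) : List (Atom P F) :=
  [eqAtom eqP (Term.var 0) (Term.var 1), eqAtom neqP (Term.var 0) (Term.var 1)]

/-- The clause `⊥ ← x ≈ y ∧ x ≉ y`. -/
def eqNeqBot {P F : Type} (eqP neqP : P) : Clause P F :=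
  ⟨[], [eqAtom eqP (Term.var 0) (Term.var 1), eqAtom neqP (Term.var 0) (Term.var 1)]⟩

/-- The unrestricted domain blocking transformation `blud`. -/
def blud {P F : Type} (domP eqP neqP : P) (M : Set (Clause P F)) : Set (Clause P F) :=
  M ∪ { ⟨blockSplitHead eqP neqP, [domAtom domP (Term.var 0), domAtom domP (Term.var 1)]⟩,
        eqNeqBot eqP neqP }

/-- The atom `sub(s,t)`. -/
def subAtom {P F : Type} (subP : P) (s t : Term F) : Atom P F := ⟨subP, [s, t]⟩

/-- The axioms describing the subterm relationship: `sub(x,x) ← dom(x)` and, for every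
`n`-ary function symbol `f` of the signature and `1 ≤ i ≤ n`,
`sub(x, f(x₁,...,xₙ)) ← sub(x,xᵢ) ∧ dom(x) ∧ dom(f(x₁,...,xₙ))`. -/
def subClauses {P F : Type} (domP subP : P) (Fs : Set (F × ℕ)) : Set (Clause P F) :=
  { ⟨[subAtom subP (Term.var 0) (Term.var 0)], [domAtom domP (Term.var 0)]⟩ } ∪
  { D | ∃ fn ∈ Fs, ∃ i, i < fn.2 ∧
        D = ⟨[subAtom subP (Term.var fn.2) (Term.app fn.1 (rangeVars fn.2))],
             [subAtom subP (Term.var fn.2) (Term.var i),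
              domAtom domP (Term.var fn.2),
              domAtom domP (Term.app fn.1 (rangeVars fn.2))]⟩ }

/-- The subterm domain blocking transformation `blsd`. -/
def blsd {P F : Type} (σ : Sig P F) (domP eqP neqP subP : P) (M : Set (Clause P F)) :
    Set (Clause P F) :=
  M ∪ subClauses domP subP σ.funcs ∪
  { ⟨blockSplitHead eqP neqP, [subAtom subP (Term.var 0) (Term.var 1)]⟩,
    eqNeqBot eqP neqP }

/-- The subterm predicate blocking transformation `blsp`. -/
def blsp {P F : Type} (σ : Sig P F) (domP eqP neqP subP : P) (M : Set (Clause P F)) :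
    Set (Clause P F) :=
  M ∪ subClauses domP subP σ.funcs ∪
  { D | ∃ p : P, (p, 1) ∈ σ.preds ∧
        D = ⟨blockSplitHead eqP neqP,
             [subAtom subP (Term.var 0) (Term.var 1),
              ⟨p, [Term.var 0]⟩, ⟨p, [Term.var 1]⟩]⟩ } ∪
  { eqNeqBot eqP neqP }

/-- The unrestricted predicate blocking transformation `blup`. -/
def blup {P F : Type} (σ : Sig P F) (domP eqP neqP : P) (M : Set (Clause P F)) :
    Set (Clause P F) :=
  M ∪ { D | ∃ p : P, (p, 1) ∈ σ.preds ∧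
        D = ⟨blockSplitHead eqP neqP, [⟨p, [Term.var 0]⟩, ⟨p, [Term.var 1]⟩]⟩ } ∪
  { eqNeqBot eqP neqP }

/-! ### Combined transformations -/

/-- The base transformations `rr`, `sh∘rr`, `crr`, `sh∘crr`
(composition read left-to-right, so `(sh∘rr)(M) = rr(sh(M))`). -/
inductive BaseTr | rr | shrr | crr | shcrr

/-- The optional blocking transformations. -/
inductive BlockTr | id | blsd | blsp | blud | blup

def applyBase {P F : Type} [DecidableEq P] [DecidableEq F] (σ : Sig P F) (domP : P) (c : F)
    (eqP : P) (bar : P → P) : BaseTr → Set (Clause P F) → Set (Clause P F)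
  | .rr, M => rr σ domP c M
  | .shrr, M => rr σ domP c (sh eqP bar M)
  | .crr, M => crr σ domP c M
  | .shcrr, M => crr σ domP c (sh eqP bar M)

def applyBlock {P F : Type} (σ : Sig P F) (domP eqP neqP subP : P) :
    BlockTr → Set (Clause P F) → Set (Clause P F)
  | .id, M => M
  | .blsd, M => blsd σ domP eqP neqP subP M
  | .blsp, M => blsp σ domP eqP neqP subP M
  | .blud, M => blud domP eqP neqP M
  | .blup, M => blup σ domP eqP neqP M

/-- A combined transformation: a base transformation optionally followed by a blocking
transformation (composition read left-to-right). -/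
def applyTr {P F : Type} [DecidableEq P] [DecidableEq F] (σ : Sig P F) (domP : P) (c : F)
    (eqP neqP subP : P) (bar : P → P) (b : BaseTr) (τ : BlockTr) (M : Set (Clause P F)) :
    Set (Clause P F) :=
  applyBlock σ domP eqP neqP subP τ (applyBase σ domP c eqP bar b M)

/-- The clause `x ≈ x ← dom(x)`. -/
def reflDomClause {P F : Type} (domP eqP : P) : Clause P F :=
  ⟨[eqAtom eqP (Term.var 0) (Term.var 0)], [domAtom domP (Term.var 0)]⟩

end BUMG


namespace BUMG

theorem termRec {F : Type} {motive : Term F → Prop}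
    (hvar : ∀ n, motive (Term.var n))
    (happ : ∀ f ts, (∀ t ∈ ts, motive t) → motive (Term.app f ts)) :
    ∀ t, motive t
  | .var n => hvar n
  | .app f ts => happ f ts (fun t _ht => termRec hvar happ t)
decreasing_by simp_wf; have := List.sizeOf_lt_of_mem _ht; omega

@[simp] theorem subst_var {F : Type} (g : ℕ → Term F) (n : ℕ) :
    Term.subst g (Term.var n) = g n := by simp [Term.subst]

@[simp] theorem subst_app {F : Type} (g : ℕ → Term F) (f : F) (ts : List (Term F)) :
    Term.subst g (Term.app f ts) = Term.app f (ts.map (Term.subst g)) := by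
  rw [Term.subst]; congr 1; simp

@[simp] theorem vars_var {F : Type} (n : ℕ) : (Term.var n : Term F).vars = [n] := by
  simp [Term.vars]

@[simp] theorem vars_app {F : Type} (f : F) (ts : List (Term F)) :
    (Term.app f ts).vars = ts.flatMap Term.vars := by
  rw [Term.vars]; simp

@[simp] theorem funcs_var {F : Type} (n : ℕ) : (Term.var n : Term F).funcs = [] := by
  simp [Term.funcs]

@[simp] theorem funcs_app {F : Type} (f : F) (ts : List (Term F)) :
    (Term.app f ts).funcs = (f, ts.length) :: ts.flatMap Term.funcs := by
  rw [Term.funcs]; simp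

theorem isGround_app {F : Type} {f : F} {ts : List (Term F)} :
    (Term.app f ts).IsGround ↔ ∀ t ∈ ts, t.IsGround := by
  simp [Term.IsGround, List.flatMap_eq_nil_iff]

theorem ground_subst {F : Type} {g : ℕ → Term F} (hg : GroundSubst g) :
    ∀ t : Term F, (Term.subst g t).IsGround := by
  refine termRec (fun n => ?_) (fun f ts ih => ?_)
  · simpa using hg n
  · rw [subst_app, isGround_app]
    intro t ht
    obtain ⟨u, hu, rfl⟩ := List.mem_map.1 ht
    exact ih u hu

theorem atom_ground_subst {P F : Type} {g : ℕ → Term F} (hg : GroundSubst g)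
    (a : Atom P F) : (a.subst g).IsGround := by
  simp only [Atom.IsGround, Atom.subst, Atom.vars, List.flatMap_eq_nil_iff]
  intro l hl
  obtain ⟨u, _, rfl⟩ := List.mem_map.1 hl
  exact ground_subst hg u

theorem subst_eq_of_eqOn {F : Type} {g g' : ℕ → Term F} :
    ∀ t : Term F, (∀ v ∈ t.vars, g v = g' v) → Term.subst g t = Term.subst g' t := by
  refine termRec (fun n h => ?_) (fun f ts ih h => ?_)
  · simpa using h n (by simp)
  · rw [subst_app, subst_app]
    congr 1
    refine List.map_congr_left (fun u hu => ih u hu (fun v hv => h v ?_))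
    simp only [vars_app, List.mem_flatMap]
    exact ⟨u, hu, hv⟩

theorem le_maxVar {P F : Type} {C : Clause P F} {v : ℕ} (h : v ∈ C.vars) :
    v ≤ C.maxVar := by
  unfold Clause.maxVar
  generalize C.vars = l at h ⊢
  induction l with
  | nil => simp at h
  | cons a l ih =>
    simp only [List.foldr_cons]
    rcases List.mem_cons.1 h with rfl | h
    · exact le_max_left _ _
    · exact (ih h).trans (le_max_right _ _)

theorem mem_vars_of_atom {P F : Type} {C : Clause P F} {a : Atom P F} {t : Term F} {v : ℕ}
    (ha : a ∈ C.atoms) (ht : t ∈ a.args) (hv : v ∈ t.vars) : v ∈ C.vars := by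
  simp only [Clause.vars, List.mem_flatMap]
  exact ⟨a, ha, by simp only [Atom.vars, List.mem_flatMap]; exact ⟨t, ht, hv⟩⟩

theorem funcs_sub_of_atom {P F : Type} {C : Clause P F} {a : Atom P F} {t : Term F}
    {fn : F × ℕ} (ha : a ∈ C.atoms) (ht : t ∈ a.args) (hfn : fn ∈ t.funcs) :
    fn ∈ C.funcs := by
  simp only [Clause.funcs, List.mem_flatMap]
  exact ⟨a, ha, by simp only [Atom.funcs, List.mem_flatMap]; exact ⟨t, ht, hfn⟩⟩

open Classical in
/-- Collapse ground terms into the domain `Δ`. -/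
noncomputable def collapse {F : Type} (Δ : Set (Term F)) (c : F) : Term F → Term F
  | .var _ => cTerm c
  | .app f ts =>
      if Term.app f (ts.attach.map (fun t => collapse Δ c t.1)) ∈ Δ then
        Term.app f (ts.attach.map (fun t => collapse Δ c t.1))
      else cTerm c
decreasing_by all_goals (simp_wf; have := List.sizeOf_lt_of_mem t.2; omega)

open Classical in
theorem collapse_app {F : Type} (Δ : Set (Term F)) (c : F) (f : F) (ts : List (Term F)) :
    collapse Δ c (Term.app f ts) =
      if Term.app f (ts.map (collapse Δ c)) ∈ Δ then Term.app f (ts.map (collapse Δ c))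
      else cTerm c := by
  rw [collapse]
  simp

@[simp] theorem collapse_var {F : Type} (Δ : Set (Term F)) (c : F) (n : ℕ) :
    collapse Δ c (Term.var n) = cTerm c := by rw [collapse]

theorem cTerm_ground {F : Type} (c : F) : (cTerm c).IsGround := by
  simp [cTerm, Term.IsGround]

theorem collapse_ground {F : Type} (Δ : Set (Term F)) (c : F) :
    ∀ t : Term F, (collapse Δ c t).IsGround := by
  refine termRec (fun n => by simp [cTerm_ground]) (fun f ts ih => ?_)
  rw [collapse_app]
  split
  · rw [isGround_app]
    intro t ht
    obtain ⟨u, hu, rfl⟩ := List.mem_map.1 ht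
    exact ih u hu
  · exact cTerm_ground c

theorem collapse_mem {F : Type} {Δ : Set (Term F)} {c : F} (hc : cTerm c ∈ Δ) :
    ∀ t : Term F, collapse Δ c t ∈ Δ := by
  intro t
  cases t with
  | var n => simpa using hc
  | app f ts =>
    rw [collapse_app]
    split
    · assumption
    · exact hc

theorem map_getD_range {α : Type*} (l : List α) (d : α) :
    (List.range l.length).map (fun j => l.getD j d) = l := by
  apply List.ext_getElem
  · simp
  · intro i h1 h2
    simp [List.getD_eq_getElem?_getD, List.getElem?_eq_getElem h2]

end BUMG

namespace BUMG

theorem isVar_iff {F : Type} {t : Term F} : t.isVar = true ↔ ∃ n, t = Term.var n := by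
  cases t <;> simp [Term.isVar]

@[simp] theorem eqAtom_subst {P F : Type} (eqP : P) (g : ℕ → Term F) (s t : Term F) :
    (eqAtom eqP s t).subst g = eqAtom eqP (Term.subst g s) (Term.subst g t) := by
  simp [eqAtom, Atom.subst]

@[simp] theorem domAtom_subst {P F : Type} (domP : P) (g : ℕ → Term F) (t : Term F) :
    (domAtom domP t).subst g = domAtom domP (Term.subst g t) := by
  simp [domAtom, Atom.subst]

theorem mem_atoms_rr {P F : Type} [DecidableEq P] {domP : P} {C : Clause P F} {a : Atom P F}
    (ha : a ∈ C.atoms) : a ∈ (rangeRestrictClause domP C).atoms := by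
  simp only [Clause.atoms, rangeRestrictClause, List.mem_append] at ha ⊢
  tauto

end BUMG

namespace BUMG

set_option maxHeartbeats 1000000 in
/-- **Completeness of range-restriction w.r.t. E-interpretations** (Corollary 1):
for every clause set `M`, if `rr(M)` is E-satisfiable then `M` is E-satisfiable. -/
theorem rr_E_completeness {P F : Type} [DecidableEq P] [DecidableEq F]
    (σ : Sig P F) (domP : P) (c : F) (eqP : P) (M : Set (Clause P F))
    (hfin : M.Finite) (hwf : WFSet σ M)
    (hdomFresh : ∀ n, (domP, n) ∉ σ.preds)
    (heq : (eqP, 2) ∈ σ.preds)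
    (hsat : ESatisfiable eqP (rr σ domP c M)) :
    ESatisfiable eqP M := by
  classical
  obtain ⟨I, hIg, hI⟩ := hsat
  set Δ : Set (Term F) := {t | domAtom domP t ∈ I} with hΔdef
  set cl : Term F → Term F := collapse Δ c with hcldef
  -- groundness facts
  have hargsg : ∀ {p : P} {args : List (Term F)}, (⟨p, args⟩ : Atom P F) ∈ I →
      ∀ t ∈ args, t.IsGround := by
    intro p args hmem t ht
    have := hIg _ hmem
    simp only [Atom.IsGround, Atom.vars, List.flatMap_eq_nil_iff] at this
    exact this t ht
  have hΔg : ∀ t ∈ Δ, Term.IsGround t := by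
    intro t ht
    exact hargsg ht t (by simp)
  -- membership of the dom(c) clause
  have hrrdomc : rangeRestrictClause domP (domcClause domP c) ∈ rr σ domP c M := by
    unfold rr
    exact Set.mem_union_left _ (Set.mem_union_left _
      ⟨domcClause domP c, Set.mem_union_left _ (Set.mem_union_right _ rfl), rfl⟩)
  have hc : cTerm c ∈ Δ := by
    have := hI _ (Set.mem_union_left _ hrrdomc) (fun _ => cTerm c) (fun _ => cTerm_ground c) ?_
    · obtain ⟨b, hb, hbI⟩ := this
      simp only [rangeRestrictClause, domcClause, List.mem_singleton] at hb
      subst hb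
      simpa [cTerm, hΔdef] using hbI
    · intro a ha
      exfalso
      simp [rangeRestrictClause, domcClause, Clause.headVars, domAtom, cTerm,
        Clause.bodyVars, Atom.vars] at ha
  have hmemΔ : ∀ t, cl t ∈ Δ := collapse_mem hc
  have hclg : ∀ t, (cl t).IsGround := collapse_ground Δ c
  have hgs : ∀ g : ℕ → Term F, GroundSubst (fun n => cl (g n)) := fun g n => hclg (g n)
  -- equality reasoning in I
  have hIrefl : ∀ t : Term F, t.IsGround → eqAtom eqP t t ∈ I := by
    intro t ht
    have hm := hI ⟨[eqAtom eqP (Term.var 0) (Term.var 0)], []⟩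
      (Set.mem_union_right _ (Set.mem_union_left _ (Set.mem_union_left _
        (Set.mem_insert _ _))))
    have := hm (fun _ => t) (fun _ => ht) (by intro a ha; exact absurd ha (by simp))
    obtain ⟨b, hb, hbI⟩ := this
    simp only [List.mem_singleton] at hb
    subst hb
    simpa using hbI
  have hIsymm : ∀ s t : Term F, s.IsGround → t.IsGround →
      eqAtom eqP s t ∈ I → eqAtom eqP t s ∈ I := by
    intro s t hs ht hst
    have hm := hI ⟨[eqAtom eqP (Term.var 1) (Term.var 0)],
        [eqAtom eqP (Term.var 0) (Term.var 1)]⟩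
      (Set.mem_union_right _ (Set.mem_union_left _ (Set.mem_union_left _
        (Set.mem_insert_of_mem _ (Set.mem_insert _ _)))))
    have := hm (fun n => if n = 0 then s else t)
      (fun n => by dsimp only; split <;> assumption) ?_
    · obtain ⟨b, hb, hbI⟩ := this
      simp only [List.mem_singleton] at hb
      subst hb
      simpa using hbI
    · intro a ha
      simp only [List.mem_singleton] at ha
      subst ha
      simpa using hst
  -- (domP, 1) is a predicate of rr M
  have hdomp1 : (domP, 1) ∈ predsOf (rr σ domP c M) := by
    refine Set.mem_setOf.2 ⟨rangeRestrictClause domP (domcClause domP c), hrrdomc, ?_⟩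
    simp [Clause.preds, Clause.atoms, rangeRestrictClause, domcClause, domAtom]
  -- dom is congruent
  have hdomcong : ∀ s t : Term F, s ∈ Δ → eqAtom eqP s t ∈ I → t ∈ Δ := by
    intro s t hs hst
    have ht : t.IsGround := hargsg hst t (by simp [eqAtom])
    have hm := hI ⟨[⟨domP, ysList 1⟩], ⟨domP, xsList 1⟩ :: eqConjList eqP 1⟩
      (Set.mem_union_right _ (Set.mem_union_right _ (by exact ⟨(domP, 1), hdomp1, rfl⟩)))
    have := hm (fun n => if n = 0 then s else t)
      (fun n => by dsimp only; split; exacts [hΔg s hs, ht]) ?_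
    · obtain ⟨b, hb, hbI⟩ := this
      simp only [List.mem_singleton] at hb
      subst hb
      simpa [Atom.subst, ysList, List.range_succ, domAtom, hΔdef] using hbI
    · intro a ha
      simp only [List.mem_cons, eqConjList, List.range_succ, List.range_zero, List.nil_append,
        List.map_cons, List.map_nil, List.mem_singleton, List.not_mem_nil, or_false] at ha
      rcases ha with rfl | rfl
      · simpa [Atom.subst, xsList, List.range_succ, domAtom, hΔdef] using hs
      · simpa using hst
  -- step 5: Δ is closed under subterms of σ-functional terms
  have hstep5 : ∀ (f : F) (us : List (Term F)), (f, us.length) ∈ σ.funcs →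
      Term.app f us ∈ Δ → ∀ u ∈ us, u ∈ Δ := by
    intro f us hfn happ u hu
    obtain ⟨i, hi, rfl⟩ := List.mem_iff_getElem.1 hu
    have husg : ∀ v ∈ us, Term.IsGround v := by
      intro v hv
      have := hΔg _ happ
      rw [isGround_app] at this
      exact this v hv
    have hm := hI ⟨[domAtom domP (Term.var i)],
        [domAtom domP (Term.app f (rangeVars us.length))]⟩
      (Set.mem_union_left _ (Set.mem_union_right _
        (by exact ⟨(f, us.length), hfn, i, hi, rfl⟩)))
    have hgg : GroundSubst (fun j => us.getD j (cTerm c)) := by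
      intro j
      show (us.getD j (cTerm c)).IsGround
      by_cases hj : j < us.length
      · rw [List.getD_eq_getElem _ _ hj]; exact husg _ (List.getElem_mem hj)
      · rw [List.getD_eq_default _ _ (by omega)]; exact cTerm_ground c
    have := hm _ hgg ?_
    · obtain ⟨b, hb, hbI⟩ := this
      simp only [List.mem_singleton] at hb
      subst hb
      simp only [domAtom_subst, subst_var] at hbI
      rw [List.getD_eq_getElem _ _ hi] at hbI
      exact hbI
    · intro a ha
      simp only [List.mem_singleton] at ha
      subst ha
      have hmapeq : List.map (Term.subst fun j => us.getD j (cTerm c))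
          (rangeVars us.length) = us := by
        rw [rangeVars, List.map_map,
          show ((Term.subst fun j => us.getD j (cTerm c)) ∘ Term.var)
              = (fun j => us.getD j (cTerm c)) from funext (fun j => subst_var _ j)]
        exact map_getD_range us (cTerm c)
      have h2 : Atom.subst (fun j => us.getD j (cTerm c))
          (domAtom domP (Term.app f (rangeVars us.length)))
          = domAtom domP (Term.app f us) := by
        rw [domAtom_subst, subst_app, hmapeq]
      rw [h2]
      exact happ
  -- step 4: arguments of true σ-atoms are in Δ
  have hstep4 : ∀ (p : P) (us : List (Term F)), (p, us.length) ∈ σ.preds →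
      (⟨p, us⟩ : Atom P F) ∈ I → ∀ u ∈ us, u ∈ Δ := by
    intro p us hpn hA u hu
    obtain ⟨i, hi, rfl⟩ := List.mem_iff_getElem.1 hu
    have husg : ∀ v ∈ us, Term.IsGround v := hargsg hA
    have hm := hI ⟨[domAtom domP (Term.var i)], [⟨p, rangeVars us.length⟩]⟩
      (Set.mem_union_left _ (Set.mem_union_left _ (Set.mem_union_right _
        (by exact ⟨(p, us.length), hpn, i, hi, rfl⟩))))
    have hgg : GroundSubst (fun j => us.getD j (cTerm c)) := by
      intro j
      show (us.getD j (cTerm c)).IsGround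
      by_cases hj : j < us.length
      · rw [List.getD_eq_getElem _ _ hj]; exact husg _ (List.getElem_mem hj)
      · rw [List.getD_eq_default _ _ (by omega)]; exact cTerm_ground c
    have := hm _ hgg ?_
    · obtain ⟨b, hb, hbI⟩ := this
      simp only [List.mem_singleton] at hb
      subst hb
      simp only [domAtom_subst, subst_var] at hbI
      rw [List.getD_eq_getElem _ _ hi] at hbI
      exact hbI
    · intro a ha
      simp only [List.mem_singleton] at ha
      subst ha
      have hmapeq : List.map (Term.subst fun j => us.getD j (cTerm c))
          (rangeVars us.length) = us := by
        rw [rangeVars, List.map_map,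
          show ((Term.subst fun j => us.getD j (cTerm c)) ∘ Term.var)
              = (fun j => us.getD j (cTerm c)) from funext (fun j => subst_var _ j)]
        exact map_getD_range us (cTerm c)
      have h2 : Atom.subst (fun j => us.getD j (cTerm c))
          (⟨p, rangeVars us.length⟩ : Atom P F) = ⟨p, us⟩ := by
        simp only [Atom.subst]
        rw [hmapeq]
      rw [h2]
      exact hA
  -- the key collapse lemma
  have hkey : ∀ (g : ℕ → Term F), ∀ t : Term F,
      (∀ fn ∈ t.funcs, fn ∈ σ.funcs) →
      Term.subst (fun n => cl (g n)) t ∈ Δ →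
      cl (Term.subst g t) = Term.subst (fun n => cl (g n)) t := by
    intro g
    refine termRec (fun n hf hΔt => by simp) (fun f ts ih hf hΔt => ?_)
    have hlen : (f, ts.length) ∈ σ.funcs := hf _ (by simp)
    rw [subst_app] at hΔt
    have hsubΔ : ∀ w ∈ ts, Term.subst (fun n => cl (g n)) w ∈ Δ := by
      intro w hw
      refine hstep5 f _ (by simpa using hlen) hΔt _ (List.mem_map_of_mem hw)
    have hmap : List.map (fun w => cl (Term.subst g w)) ts =
        List.map (Term.subst fun n => cl (g n)) ts := by
      refine List.map_congr_left (fun w hw => ih w hw (fun fn hfn => ?_) (hsubΔ w hw))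
      refine hf fn ?_
      simp only [funcs_app, List.mem_cons, List.mem_flatMap]
      exact Or.inr ⟨w, hw, hfn⟩
    rw [subst_app, subst_app]
    show collapse Δ c (Term.app f (List.map (Term.subst g) ts))
        = Term.app f (List.map (Term.subst fun n => cl (g n)) ts)
    rw [collapse_app, List.map_map,
      show (collapse Δ c ∘ Term.subst g) = fun w => cl (Term.subst g w) from rfl,
      hmap, if_pos hΔt]
  have hItrans : ∀ r s t : Term F, r.IsGround → s.IsGround → t.IsGround →
      eqAtom eqP r s ∈ I → eqAtom eqP s t ∈ I → eqAtom eqP r t ∈ I := by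
    intro r s t hr hs ht hrs hst
    have hm := hI ⟨[eqAtom eqP (Term.var 0) (Term.var 2)],
        [eqAtom eqP (Term.var 0) (Term.var 1), eqAtom eqP (Term.var 1) (Term.var 2)]⟩
      (Set.mem_union_right _ (Set.mem_union_left _ (Set.mem_union_left _
        (Set.mem_insert_of_mem _ (Set.mem_insert_of_mem _ rfl)))))
    have := hm (fun n => if n = 0 then r else if n = 1 then s else t)
      (fun n => by dsimp only; split; exacts [hr, by split; exacts [hs, ht]]) ?_
    · obtain ⟨b, hb, hbI⟩ := this
      simp only [List.mem_singleton] at hb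
      subst hb
      simpa using hbI
    · intro a ha
      simp only [List.mem_cons, List.mem_singleton, List.not_mem_nil, or_false] at ha
      rcases ha with rfl | rfl
      · simpa using hrs
      · simpa using hst
  -- signature inclusions
  have hrrimg : ∀ C ∈ M, rangeRestrictClause domP C ∈ rr σ domP c M := by
    intro C hC
    unfold rr
    exact Set.mem_union_left _ (Set.mem_union_left _
      ⟨C, Set.mem_union_left _ (Set.mem_union_left _ hC), rfl⟩)
  have hpredsIncl : ∀ pn ∈ predsOf M, pn ∈ predsOf (rr σ domP c M) := by
    rintro pn ⟨C, hC, hpn⟩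
    refine Set.mem_setOf.2 ⟨rangeRestrictClause domP C, hrrimg C hC, ?_⟩
    simp only [Clause.preds, List.mem_map] at hpn ⊢
    obtain ⟨a, ha, rfl⟩ := hpn
    exact ⟨a, mem_atoms_rr ha, rfl⟩
  have hfuncsIncl : ∀ fn ∈ funcsOf M, fn ∈ funcsOf (rr σ domP c M) := by
    rintro fn ⟨C, hC, hfn⟩
    refine Set.mem_setOf.2 ⟨rangeRestrictClause domP C, hrrimg C hC, ?_⟩
    simp only [Clause.funcs, List.mem_flatMap] at hfn ⊢
    obtain ⟨a, ha, hfn⟩ := hfn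
    exact ⟨a, mem_atoms_rr ha, hfn⟩
  -- the candidate interpretation
  refine ⟨{a | a.IsGround ∧ (⟨a.pred, a.args.map cl⟩ : Atom P F) ∈ I},
    fun a ha => ha.1, ?_⟩
  intro C hC
  rcases hC with hC | hC
  · -- C ∈ M
    intro gr hgr hbody
    set g' : ℕ → Term F := fun n => cl (gr n) with hg'def
    have hg' : GroundSubst g' := hgs gr
    have hbodyI : ∀ a ∈ C.body,
        (⟨a.pred, a.args.map (fun t => cl (Term.subst gr t))⟩ : Atom P F) ∈ I := by
      intro a ha
      have h2 := (hbody a ha).2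
      have he : a.args.map (fun t => cl (Term.subst gr t))
          = (a.args.map (Term.subst gr)).map cl := by
        rw [List.map_map]; rfl
      rw [show (⟨a.pred, a.args.map (fun t => cl (Term.subst gr t))⟩ : Atom P F)
          = ⟨a.pred, (a.args.map (Term.subst gr)).map cl⟩ from by rw [he]]
      exact h2
    have hargsΔ : ∀ a ∈ C.body, ∀ t ∈ a.args, Term.subst g' t ∈ Δ := by
      intro a ha t ht
      by_cases hv : t.isVar
      · obtain ⟨n, rfl⟩ := isVar_iff.1 hv
        simpa using hmemΔ (gr n)
      · obtain ⟨i, hi, rfl⟩ := List.mem_iff_getElem.1 ht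
        have hvf : (a.args[i]).isVar = false := by
          revert hv; cases (a.args[i]).isVar <;> simp
        set D : Clause P F := ⟨[domAtom domP a.args[i]],
          [⟨a.pred, abstrArgs (C.maxVar + 1) a.args⟩]⟩ with hDdef
        have hDmem : rangeRestrictClause domP D ∈ rr σ domP c M := by
          unfold rr
          refine Set.mem_union_left _ (Set.mem_union_left _
            ⟨D, Set.mem_union_right _ ?_, rfl⟩)
          exact ⟨C, hC, a, ha, ⟨i, hi⟩, hvf, rfl⟩
        set τ : ℕ → Term F := fun n => if n ≤ C.maxVar then g' n
          else cl (Term.subst gr (a.args.getD (n - (C.maxVar + 1)) (Term.var 0))) with hτdef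
        have hτg : GroundSubst τ := by
          intro n
          show (if n ≤ C.maxVar then g' n else _).IsGround
          split
          · exact hg' n
          · exact hclg _
        have hτΔ : ∀ n, τ n ∈ Δ := by
          intro n
          show (if n ≤ C.maxVar then g' n else _) ∈ Δ
          split
          · exact hmemΔ (gr n)
          · exact hmemΔ _
        have hmemvars : ∀ v ∈ (a.args[i]).vars, v ≤ C.maxVar := by
          intro v hv'
          exact le_maxVar (mem_vars_of_atom
            (by simp only [Clause.atoms, List.mem_append]; exact Or.inr ha)
            (List.getElem_mem hi) hv')
        have hsat2 := hI _ (Set.mem_union_left _ hDmem) τ hτg ?_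
        · obtain ⟨b, hb, hbI⟩ := hsat2
          simp only [hDdef, rangeRestrictClause, List.mem_singleton] at hb
          subst hb
          rw [domAtom_subst] at hbI
          rw [show Term.subst τ a.args[i] = Term.subst g' a.args[i] from
            subst_eq_of_eqOn _ (fun v hv' => by
              show (if v ≤ C.maxVar then g' v else _) = g' v
              rw [if_pos (hmemvars v hv')])] at hbI
          exact hbI
        · intro b hb
          simp only [hDdef, rangeRestrictClause, List.mem_append, List.mem_singleton] at hb
          rcases hb with rfl | hb
          · -- the abstracted atom
            have hargs : (abstrArgs (C.maxVar + 1) a.args).map (Term.subst τ)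
                = a.args.map (fun t => cl (Term.subst gr t)) := by
              refine List.ext_getElem (by simp [abstrArgs, List.length_mapIdx]) ?_
              intro j h1 h2
              have hj : j < a.args.length := by
                simpa [abstrArgs, List.length_mapIdx] using h2
              simp only [List.getElem_map, abstrArgs, List.getElem_mapIdx]
              by_cases hvj : (a.args[j]).isVar
              · obtain ⟨x, hx⟩ := isVar_iff.1 hvj
                rw [if_pos hvj, hx, subst_var]
                have hxle : x ≤ C.maxVar := le_maxVar (mem_vars_of_atom
                  (by simp only [Clause.atoms, List.mem_append]; exact Or.inr ha)
                  (List.getElem_mem hj) (by rw [hx]; simp))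
                show (if x ≤ C.maxVar then g' x else _) = _
                rw [if_pos hxle]
                simp [hg'def]
              · rw [if_neg hvj, subst_var]
                show (if C.maxVar + 1 + j ≤ C.maxVar then g' (C.maxVar + 1 + j) else
                  cl (Term.subst gr (a.args.getD (C.maxVar + 1 + j - (C.maxVar + 1))
                    (Term.var 0)))) = _
                rw [if_neg (by omega), show C.maxVar + 1 + j - (C.maxVar + 1) = j from by
                  omega, List.getD_eq_getElem _ _ hj]
            rw [show Atom.subst τ (⟨a.pred, abstrArgs (C.maxVar + 1) a.args⟩ : Atom P F)
                = ⟨a.pred, a.args.map (fun t => cl (Term.subst gr t))⟩ from by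
              simp only [Atom.subst]; rw [hargs]]
            exact hbodyI a ha
          · obtain ⟨v, -, rfl⟩ := List.mem_map.1 hb
            rw [domAtom_subst, subst_var]
            exact hτΔ v
    have hbodyI' : ∀ a ∈ C.body, Atom.subst g' a ∈ I := by
      intro a ha
      have hmapeq : a.args.map (Term.subst g')
          = a.args.map (fun t => cl (Term.subst gr t)) := by
        refine List.map_congr_left (fun t ht => ?_)
        exact (hkey gr t (fun fn hfn => (hwf C hC).2 fn (funcs_sub_of_atom
          (by simp only [Clause.atoms, List.mem_append]; exact Or.inr ha) ht hfn))
          (hargsΔ a ha t ht)).symm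
      show (⟨a.pred, a.args.map (Term.subst g')⟩ : Atom P F) ∈ I
      rw [hmapeq]
      exact hbodyI a ha
    have hmain := hI _ (Set.mem_union_left _ (hrrimg C hC)) g' hg' ?_
    · obtain ⟨b, hb, hbI⟩ := hmain
      have hbheads : b ∈ C.heads := hb
      refine ⟨b, hbheads, atom_ground_subst hgr b, ?_⟩
      have hpn : (b.pred, b.args.length) ∈ σ.preds := by
        refine (hwf C hC).1 _ ?_
        exact List.mem_map.2 ⟨b, by
          simp only [Clause.atoms, List.mem_append]; exact Or.inl hbheads, rfl⟩
      have hbΔ : ∀ t ∈ b.args, Term.subst g' t ∈ Δ := by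
        intro t ht
        refine hstep4 b.pred (b.args.map (Term.subst g')) (by simpa using hpn) hbI _
          (List.mem_map_of_mem ht)
      have hmapeq : (b.args.map (Term.subst gr)).map cl
          = b.args.map (Term.subst g') := by
        rw [List.map_map]
        refine List.map_congr_left (fun t ht => ?_)
        exact hkey gr t (fun fn hfn => (hwf C hC).2 fn (funcs_sub_of_atom
          (by simp only [Clause.atoms, List.mem_append]; exact Or.inl hbheads) ht hfn))
          (hbΔ t ht)
      show (⟨b.pred, (b.args.map (Term.subst gr)).map cl⟩ : Atom P F) ∈ I
      rw [hmapeq]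
      exact hbI
    · intro b hb
      simp only [rangeRestrictClause, List.mem_append] at hb
      rcases hb with hb | hb
      · exact hbodyI' b hb
      · obtain ⟨v, -, rfl⟩ := List.mem_map.1 hb
        rw [domAtom_subst, subst_var]
        exact hmemΔ (gr v)
  · -- C ∈ EAX
    rcases hC with (hC | hC) | hC
    · -- base equality axioms
      simp only [Set.mem_insert_iff, Set.mem_singleton_iff] at hC
      rcases hC with rfl | rfl | rfl
      · -- reflexivity
        intro gr hgr _
        refine ⟨_, List.mem_singleton_self _, atom_ground_subst hgr _, ?_⟩
        simpa [eqAtom, Atom.subst] using hIrefl (cl (gr 0)) (hclg _)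
      · -- symmetry
        intro gr hgr hbody
        have h2 := (hbody _ (List.mem_cons_self)).2
        refine ⟨_, List.mem_singleton_self _, atom_ground_subst hgr _, ?_⟩
        have := hIsymm (cl (gr 0)) (cl (gr 1)) (hclg _) (hclg _)
          (by simpa [eqAtom, Atom.subst] using h2)
        simpa [eqAtom, Atom.subst] using this
      · -- transitivity
        intro gr hgr hbody
        have h01 := (hbody _ (List.mem_cons_self)).2
        have h12 := (hbody _ (List.mem_cons_of_mem _ (List.mem_cons_self))).2
        refine ⟨_, List.mem_singleton_self _, atom_ground_subst hgr _, ?_⟩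
        have := hItrans (cl (gr 0)) (cl (gr 1)) (cl (gr 2)) (hclg _) (hclg _) (hclg _)
          (by simpa [eqAtom, Atom.subst] using h01)
          (by simpa [eqAtom, Atom.subst] using h12)
        simpa [eqAtom, Atom.subst] using this
    · -- function congruence
      obtain ⟨fn, hfn, rfl⟩ := hC
      intro gr hgr hbody
      set τ : ℕ → Term F := fun n => cl (gr n) with hτdef
      have heqs : ∀ b ∈ eqConjList eqP fn.2, Atom.subst τ b ∈ I := by
        intro b hb
        obtain ⟨i, hi, rfl⟩ := List.mem_map.1 hb
        have h2 := (hbody _ hb).2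
        simpa [eqAtom, Atom.subst] using h2
      have hm := hI ⟨[eqAtom eqP (Term.app fn.1 (xsList fn.2))
          (Term.app fn.1 (ysList fn.2))], eqConjList eqP fn.2⟩
        (Set.mem_union_right _ (Set.mem_union_left _ (Set.mem_union_right _
          (by exact ⟨fn, hfuncsIncl fn hfn, rfl⟩)))) τ (hgs gr) heqs
      obtain ⟨b, hb, hbI⟩ := hm
      simp only [List.mem_singleton] at hb
      subst hb
      rw [eqAtom_subst, subst_app, subst_app] at hbI
      set u' : Term F := Term.app fn.1 ((xsList fn.2).map (Term.subst τ)) with hu'def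
      set v' : Term F := Term.app fn.1 ((ysList fn.2).map (Term.subst τ)) with hv'def
      have hu'g : u'.IsGround := hargsg hbI _ (by simp [eqAtom])
      have hv'g : v'.IsGround := hargsg hbI _ (by simp [eqAtom])
      refine ⟨_, List.mem_singleton_self _, atom_ground_subst hgr _, ?_⟩
      have hxmap : ((xsList fn.2).map (Term.subst gr)).map cl
          = (xsList fn.2).map (Term.subst τ) := by
        rw [List.map_map]
        refine List.map_congr_left (fun t ht => ?_)
        obtain ⟨i, -, rfl⟩ := List.mem_map.1 ht
        simp [hτdef]
      have hymap : ((ysList fn.2).map (Term.subst gr)).map cl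
          = (ysList fn.2).map (Term.subst τ) := by
        rw [List.map_map]
        refine List.map_congr_left (fun t ht => ?_)
        obtain ⟨i, -, rfl⟩ := List.mem_map.1 ht
        simp [hτdef]
      have hclu : cl (Term.subst gr (Term.app fn.1 (xsList fn.2)))
          = if u' ∈ Δ then u' else cTerm c := by
        rw [subst_app]
        show collapse Δ c _ = _
        rw [collapse_app, show List.map (collapse Δ c) ((xsList fn.2).map (Term.subst gr))
            = (xsList fn.2).map (Term.subst τ) from hxmap]
      have hclv : cl (Term.subst gr (Term.app fn.1 (ysList fn.2)))
          = if v' ∈ Δ then v' else cTerm c := by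
        rw [subst_app]
        show collapse Δ c _ = _
        rw [collapse_app, show List.map (collapse Δ c) ((ysList fn.2).map (Term.subst gr))
            = (ysList fn.2).map (Term.subst τ) from hymap]
      show (⟨eqP, [cl (Term.subst gr (Term.app fn.1 (xsList fn.2))),
          cl (Term.subst gr (Term.app fn.1 (ysList fn.2)))]⟩ : Atom P F) ∈ I
      rw [hclu, hclv]
      by_cases hu : u' ∈ Δ
      · have hv : v' ∈ Δ := hdomcong u' v' hu hbI
        rw [if_pos hu, if_pos hv]
        exact hbI
      · have hv : v' ∉ Δ := fun hv =>
          hu (hdomcong v' u' hv (hIsymm u' v' hu'g hv'g hbI))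
        rw [if_neg hu, if_neg hv]
        exact hIrefl (cTerm c) (cTerm_ground c)
    · -- predicate congruence
      obtain ⟨pn, hpn, rfl⟩ := hC
      intro gr hgr hbody
      set τ : ℕ → Term F := fun n => cl (gr n) with hτdef
      have hx : Atom.subst τ (⟨pn.1, xsList pn.2⟩ : Atom P F) ∈ I := by
        have h2 := (hbody _ (List.mem_cons_self)).2
        show (⟨pn.1, (xsList pn.2).map (Term.subst τ)⟩ : Atom P F) ∈ I
        have : (xsList pn.2).map (Term.subst τ)
            = ((xsList pn.2).map (Term.subst gr)).map cl := by
          rw [List.map_map]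
          refine List.map_congr_left (fun t ht => ?_)
          obtain ⟨i, -, rfl⟩ := List.mem_map.1 ht
          simp [hτdef]
        rw [this]
        exact h2
      have heqs : ∀ b ∈ eqConjList eqP pn.2, Atom.subst τ b ∈ I := by
        intro b hb
        obtain ⟨i, hi, rfl⟩ := List.mem_map.1 hb
        have h2 := (hbody _ (List.mem_cons_of_mem _ hb)).2
        simpa [eqAtom, Atom.subst] using h2
      have hm := hI ⟨[⟨pn.1, ysList pn.2⟩], ⟨pn.1, xsList pn.2⟩ :: eqConjList eqP pn.2⟩
        (Set.mem_union_right _ (Set.mem_union_right _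
          (by exact ⟨pn, hpredsIncl pn hpn, rfl⟩))) τ (hgs gr) ?_
      · obtain ⟨b, hb, hbI⟩ := hm
        simp only [List.mem_singleton] at hb
        subst hb
        refine ⟨_, List.mem_singleton_self _, atom_ground_subst hgr _, ?_⟩
        show (⟨pn.1, ((ysList pn.2).map (Term.subst gr)).map cl⟩ : Atom P F) ∈ I
        have : ((ysList pn.2).map (Term.subst gr)).map cl
            = (ysList pn.2).map (Term.subst τ) := by
          rw [List.map_map]
          refine List.map_congr_left (fun t ht => ?_)
          obtain ⟨i, -, rfl⟩ := List.mem_map.1 ht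
          simp [hτdef]
        rw [this]
        exact hbI
      · intro b hb
        rcases List.mem_cons.1 hb with rfl | hb
        · exact hx
        · exact heqs b hb

end BUMG
end

section
/- For every clause set M, the clause set crr(M) is range-restricted, and M is satisfiable if and only if crr(M) is satisfiable. -/
namespace BUMG

theorem List.attach_flatMap' {α β : Type*} (ts : List α) (f : α → List β) :
    ts.attach.flatMap (fun t => f t.1) = ts.flatMap f := by
  conv_rhs => rw [← List.attach_map_subtype_val ts]
  rw [List.flatMap_map]

namespace Term
variable {F : Type}
@[simp] theorem subst_var (g : ℕ → Term F) (n : ℕ) : subst g (var n) = g n := by rw [subst]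
@[simp] theorem subst_app (g : ℕ → Term F) (f : F) (ts : List (Term F)) :
    subst g (app f ts) = app f (ts.map (subst g)) := by
  rw [subst]; simp [List.attach_map_val]
@[simp] theorem vars_var (n : ℕ) : (var n : Term F).vars = [n] := by rw [vars]
@[simp] theorem vars_app (f : F) (ts : List (Term F)) :
    (app f ts : Term F).vars = ts.flatMap vars := by
  rw [vars]; rw [List.attach_flatMap']
@[simp] theorem funcs_app (f : F) (ts : List (Term F)) :
    (app f ts : Term F).funcs = (f, ts.length) :: ts.flatMap funcs := by
  rw [funcs]; rw [List.attach_flatMap']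

/-- Nested induction principle. -/
theorem my_ind {motive : Term F → Prop} (hv : ∀ n, motive (var n))
    (ha : ∀ f ts, (∀ t ∈ ts, motive t) → motive (app f ts)) : ∀ t, motive t
  | var n => hv n
  | app f ts => ha f ts (fun t ht => my_ind hv ha t)
decreasing_by simp_wf; have := List.sizeOf_lt_of_mem ht; omega
end Term
namespace Term
variable {F : Type}

theorem vars_subst_ground {g : ℕ → Term F} (hg : GroundSubst g) :
    ∀ t : Term F, (t.subst g).vars = [] := by
  intro t
  induction t using my_ind with
  | hv n => simpa [IsGround] using hg n
  | ha f ts ih =>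
    simp only [subst_app, vars_app, List.flatMap_eq_nil_iff, List.mem_map]
    rintro _ ⟨t, ht, rfl⟩
    exact ih t ht

open Classical in
/-- Retraction onto the Herbrand universe over `sf` (plus `c`). -/
noncomputable def hmap (sf : Set (F × ℕ)) (c : F) : Term F → Term F
  | var _ => app c []
  | app f ts =>
      if (f, ts.length) ∈ sf then app f (ts.attach.map (fun t => hmap sf c t.1))
      else app c []
decreasing_by simp_wf; have := List.sizeOf_lt_of_mem t.2; omega

@[simp] theorem hmap_var (sf : Set (F × ℕ)) (c : F) (n : ℕ) :
    hmap sf c (var n) = app c [] := by rw [hmap]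

open Classical in
theorem hmap_app (sf : Set (F × ℕ)) (c : F) (f : F) (ts : List (Term F)) :
    hmap sf c (app f ts) =
      if (f, ts.length) ∈ sf then app f (ts.map (hmap sf c)) else app c [] := by
  rw [hmap]; simp [List.attach_map_val]

theorem hmap_ground (sf : Set (F × ℕ)) (c : F) : ∀ t : Term F, (hmap sf c t).vars = [] := by
  intro t
  induction t using my_ind with
  | hv n => simp
  | ha f ts ih =>
    rw [hmap_app]
    split_ifs with hf
    · simp only [vars_app, List.flatMap_eq_nil_iff, List.mem_map]
      rintro _ ⟨t, ht, rfl⟩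
      exact ih t ht
    · simp

theorem hmap_subst {sf : Set (F × ℕ)} {c : F} {g : ℕ → Term F} :
    ∀ t : Term F, (∀ fn ∈ t.funcs, fn ∈ sf) →
      hmap sf c (t.subst g) = t.subst (fun n => hmap sf c (g n)) := by
  intro t
  induction t using my_ind with
  | hv n => simp
  | ha f ts ih =>
    intro hfn
    have hf : (f, ts.length) ∈ sf := hfn _ (by simp)
    rw [subst_app, hmap_app]
    simp only [List.length_map, hf, if_pos, subst_app, List.map_map]
    congr 1
    apply List.map_congr_left
    intro t ht
    apply ih t ht
    intro fn h
    apply hfn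
    simp only [funcs_app, List.mem_cons]
    exact Or.inr (List.mem_flatMap.2 ⟨t, ht, h⟩)

end Term

variable {P F : Type}

theorem atom_subst_ground {g : ℕ → Term F} (hg : GroundSubst g) (a : Atom P F) :
    (a.subst g).IsGround := by
  simp only [Atom.IsGround, Atom.subst, Atom.vars, List.flatMap_eq_nil_iff, List.mem_map]
  rintro _ ⟨t, ht, rfl⟩
  exact Term.vars_subst_ground hg t

theorem atom_subst_hmap {sf : Set (F × ℕ)} {c : F} {g : ℕ → Term F} (a : Atom P F)
    (h : ∀ fn ∈ a.funcs, fn ∈ sf) :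
    (⟨a.pred, (a.subst g).args.map (Term.hmap sf c)⟩ : Atom P F)
      = a.subst (fun n => Term.hmap sf c (g n)) := by
  simp only [Atom.subst, List.map_map]
  congr 1
  apply List.map_congr_left
  intro t ht
  apply Term.hmap_subst t
  intro fn hf
  apply h
  simp only [Atom.funcs]
  exact List.mem_flatMap.2 ⟨t, ht, hf⟩

theorem rrClause_rr (domP : P) [DecidableEq P] [DecidableEq F] (C : Clause P F) :
    (rangeRestrictClause domP C).RangeRestricted := by
  intro v hv
  set dl := (C.headVars.filter (fun v => v ∉ C.body.flatMap Atom.vars)).dedup with hdlDef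
  have h2 : (dl.map (fun w => domAtom domP (Term.var w : Term F))).flatMap
      (Atom.vars (P := P)) = dl := by
    rw [List.flatMap_map]
    simp [domAtom, Atom.vars]
  have hbodyEq : (rangeRestrictClause domP C).bodyVars = C.body.flatMap Atom.vars ++ dl := by
    simp only [Clause.bodyVars, rangeRestrictClause, List.flatMap_append, h2]
    exact congrArg (C.body.flatMap Atom.vars ++ ·) h2
  have hvarsEq : (rangeRestrictClause domP C).vars
      = C.heads.flatMap Atom.vars ++ (C.body.flatMap Atom.vars ++ dl) := by
    simp only [Clause.vars, Clause.atoms, Clause.bodyVars, rangeRestrictClause,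
      List.flatMap_append, h2]
    exact congrArg (fun l => C.heads.flatMap Atom.vars ++ (C.body.flatMap Atom.vars ++ l)) h2
  rw [hvarsEq] at hv
  rw [hbodyEq]
  rcases List.mem_append.1 hv with hv | hv
  · by_cases hb : v ∈ C.body.flatMap Atom.vars
    · exact List.mem_append.2 (Or.inl hb)
    · refine List.mem_append.2 (Or.inr ?_)
      exact List.mem_dedup.2 (List.mem_filter.2 ⟨hv, by simp [hb]⟩)
  · rcases List.mem_append.1 hv with hv | hv
    · exact List.mem_append.2 (Or.inl hv)
    · exact List.mem_append.2 (Or.inr hv)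
theorem crrStep3_rr (domP : P) (f : F) (n : ℕ) :
    (⟨[domAtom domP (Term.app f (rangeVars n))],
      (List.range n).map (fun i => domAtom domP (Term.var i))⟩ : Clause P F).RangeRestricted := by
  intro v hv
  simp only [Clause.vars, Clause.atoms, Clause.bodyVars, domAtom, Atom.vars, rangeVars,
    List.flatMap_append, List.mem_append, List.mem_flatMap, List.mem_map, List.mem_singleton,
    List.mem_range, Term.vars_app, Term.vars_var, List.flatMap_cons, List.flatMap_nil,
    List.append_nil, List.flatMap_map, List.mem_cons, List.not_mem_nil] at hv ⊢
  tauto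

noncomputable def hAtom (sf : Set (F × ℕ)) (c : F) (a : Atom P F) : Atom P F :=
  ⟨a.pred, a.args.map (Term.hmap sf c)⟩

theorem hAtom_subst {sf : Set (F × ℕ)} {c : F} {g : ℕ → Term F} (a : Atom P F)
    (h : ∀ fn ∈ a.funcs, fn ∈ sf) :
    hAtom sf c (a.subst g) = a.subst (fun n => Term.hmap sf c (g n)) := by
  simp only [hAtom, Atom.subst, List.map_map]
  congr 1
  apply List.map_congr_left
  intro t ht
  apply Term.hmap_subst t
  intro fn hf
  apply h
  simp only [Atom.funcs]
  exact List.mem_flatMap.2 ⟨t, ht, hf⟩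
theorem crr_main {P F : Type} [DecidableEq P] [DecidableEq F]
    (σ : Sig P F) (domP : P) (c : F) (M : Set (Clause P F))
    (hfin : M.Finite) (hwf : WFSet σ M)
    (hdomFresh : ∀ n, (domP, n) ∉ σ.preds) :
    RangeRestrictedSet (crr σ domP c M) ∧
    (Satisfiable M ↔ Satisfiable (crr σ domP c M)) := by
  constructor
  · rintro D hD
    rcases hD with ⟨C0, -, rfl⟩ | ⟨fn, -, rfl⟩
    · exact rrClause_rr domP C0
    · exact crrStep3_rr domP fn.1 fn.2
  constructor
  · -- Sat M → Sat crr M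
    rintro ⟨I, hIg, hIs⟩
    refine ⟨I ∪ {x | ∃ t : Term F, t.vars = [] ∧ x = domAtom domP t}, ?_, ?_⟩
    · rintro a (ha | ⟨t, ht, rfl⟩)
      · exact hIg a ha
      · simp [Atom.IsGround, Atom.vars, domAtom, ht]
    · rintro D (⟨C0, hC0, rfl⟩ | ⟨fn, hfn, rfl⟩)
      · rcases hC0 with hC0 | rfl
        · -- C0 ∈ M
          intro g hgg hbody
          have hb : ∀ a ∈ C0.body, a.subst g ∈ I := by
            intro a ha
            have hmem := hbody a (by
              simp only [rangeRestrictClause, List.mem_append]; exact Or.inl ha)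
            rcases hmem with hmem | ⟨t, -, heq⟩
            · exact hmem
            · exfalso
              have hpred : a.pred = domP := by
                have : (a.subst g).pred = (domAtom domP t).pred := by rw [heq]
                simpa [Atom.subst, domAtom] using this
              apply hdomFresh a.args.length
              rw [← hpred]
              exact (hwf C0 hC0).1 _ (List.mem_map.2 ⟨a, by
                simp only [Clause.atoms, List.mem_append]; exact Or.inr ha, rfl⟩)
          obtain ⟨a, haH, haI⟩ := hIs C0 hC0 g hgg hb
          exact ⟨a, haH, Or.inl haI⟩
        · -- C0 = domcClause
          intro g hgg hbody
          refine ⟨domAtom domP (cTerm c), ?_, Or.inr ⟨cTerm c, by simp [cTerm], ?_⟩⟩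
          · show _ ∈ (rangeRestrictClause domP (domcClause domP c)).heads
            simp [rangeRestrictClause, domcClause]
          · simp [Atom.subst, domAtom, cTerm]
      · -- crrStep3
        intro g hgg hbody
        refine ⟨domAtom domP (Term.app fn.1 (rangeVars fn.2)), by simp,
          Or.inr ⟨Term.subst g (Term.app fn.1 (rangeVars fn.2)),
            Term.vars_subst_ground hgg _, ?_⟩⟩
        simp [Atom.subst, domAtom]
  · -- Sat crr M → Sat M
    rintro ⟨I, hIg, hIs⟩
    have hdomc : domAtom domP (cTerm c) ∈ I := by
      have hmem : rangeRestrictClause domP (domcClause domP c) ∈ crr σ domP c M :=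
        Or.inl ⟨domcClause domP c, Or.inr rfl, rfl⟩
      have hgg : GroundSubst (fun _ : ℕ => (cTerm c : Term F)) := by
        intro n; simp [Term.IsGround, cTerm]
      have hbody0 : ∀ a ∈ (rangeRestrictClause domP (domcClause domP c)).body,
          a.subst (fun _ => cTerm c) ∈ I := by
        intro a ha
        exfalso
        simp [rangeRestrictClause, domcClause, Clause.headVars, Atom.vars, domAtom,
          cTerm] at ha
      obtain ⟨a, haH, haI⟩ := hIs _ hmem (fun _ => cTerm c) hgg hbody0
      have ha' : a = domAtom domP (cTerm c) := by
        simpa [rangeRestrictClause, domcClause] using haH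
      subst ha'
      simpa [Atom.subst, domAtom, cTerm] using haI
    have hdom : ∀ t : Term F, domAtom domP (Term.hmap σ.funcs c t) ∈ I := by
      intro t
      induction t using Term.my_ind with
      | hv n => simpa [cTerm] using hdomc
      | ha f ts ih =>
        rw [Term.hmap_app]
        split_ifs with hf
        · have hmem : (⟨[domAtom domP (Term.app f (rangeVars ts.length))],
              (List.range ts.length).map (fun i => domAtom domP (Term.var i))⟩ : Clause P F)
              ∈ crr σ domP c M := Or.inr ⟨(f, ts.length), hf, rfl⟩
          set g : ℕ → Term F :=
            fun i => if hi : i < ts.length then Term.hmap σ.funcs c ts[i] else cTerm c with hgdef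
          have hgg : GroundSubst g := by
            intro i
            rw [hgdef]
            dsimp only
            split
            · exact Term.hmap_ground _ _ _
            · simp [Term.IsGround, cTerm]
          have hbody0 : ∀ a ∈ (List.range ts.length).map
              (fun i => domAtom domP (Term.var i : Term F)), a.subst g ∈ I := by
            rintro a ha
            obtain ⟨i, hi, rfl⟩ := List.mem_map.1 ha
            have hi' := List.mem_range.1 hi
            have heq : (domAtom domP (Term.var i : Term F)).subst g
                = domAtom domP (Term.hmap σ.funcs c ts[i]) := by
              simp [Atom.subst, domAtom, hgdef, hi']
            rw [heq]
            exact ih ts[i] (ts.getElem_mem hi')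
          obtain ⟨a, haH, haI⟩ := hIs _ hmem g hgg hbody0
          have ha' : a = domAtom domP (Term.app f (rangeVars ts.length)) := by
            simpa using haH
          subst ha'
          have heq : (domAtom domP (Term.app f (rangeVars ts.length))).subst g
              = domAtom domP (Term.app f (ts.map (Term.hmap σ.funcs c))) := by
            simp only [Atom.subst, domAtom, List.map_cons, List.map_nil, Term.subst_app]
            congr 3
            apply List.ext_getElem
            · simp [rangeVars]
            · intro i h1 h2
              simp only [rangeVars, List.map_map, List.getElem_map, List.getElem_range]
              have hi : i < ts.length := by simpa [rangeVars] using h2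
              simp [hgdef, hi]
          rw [heq] at haI
          exact haI
        · simpa [cTerm] using hdomc
    refine ⟨{a : Atom P F | a.IsGround ∧ hAtom σ.funcs c a ∈ I}, fun a ha => ha.1, ?_⟩
    intro C hC g hgg hbody
    have hfuncsC : ∀ a ∈ C.atoms, ∀ fn ∈ a.funcs, fn ∈ σ.funcs := by
      intro a ha fn hfn
      exact (hwf C hC).2 fn (List.mem_flatMap.2 ⟨a, ha, hfn⟩)
    have hmem : rangeRestrictClause domP C ∈ crr σ domP c M := Or.inl ⟨C, Or.inl hC, rfl⟩
    have hgg' : GroundSubst (fun n => Term.hmap σ.funcs c (g n)) :=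
      fun n => Term.hmap_ground _ _ _
    have hbody' : ∀ a ∈ (rangeRestrictClause domP C).body,
        a.subst (fun n => Term.hmap σ.funcs c (g n)) ∈ I := by
      intro a ha
      rcases List.mem_append.1 ha with ha | ha
      · rw [← hAtom_subst a (hfuncsC a (by
          simp only [Clause.atoms, List.mem_append]; exact Or.inr ha))]
        exact (hbody a ha).2
      · obtain ⟨v, hv, rfl⟩ := List.mem_map.1 ha
        show (domAtom domP (Term.var v)).subst _ ∈ I
        simpa [Atom.subst, domAtom] using hdom (g v)
    obtain ⟨a, haH, haI⟩ := hIs _ hmem _ hgg' hbody'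
    refine ⟨a, haH, atom_subst_ground hgg a, ?_⟩
    rw [hAtom_subst a (hfuncsC a (by
      simp only [Clause.atoms, List.mem_append]; exact Or.inl haH))]
    exact haI
/-- For every clause set `M`, the clause set `crr(M)` is range-restricted, and `M` is
satisfiable if and only if `crr(M)` is satisfiable. -/
theorem crr_rangeRestricted_and_correct {P F : Type} [DecidableEq P] [DecidableEq F]
    (σ : Sig P F) (domP : P) (c : F) (M : Set (Clause P F))
    (hfin : M.Finite) (hwf : WFSet σ M)
    (hdomFresh : ∀ n, (domP, n) ∉ σ.preds) :
    RangeRestrictedSet (crr σ domP c M) ∧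
    (Satisfiable M ↔ Satisfiable (crr σ domP c M)) := by
  exact crr_main σ domP c M hfin hwf hdomFresh

end BUMG
end
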